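/- arXiv:2407.18482 — 3 statements merged into one kernel-verified Lean document; each statement's English description precedes it below -/
import Mathlib

section
/- For a convex function L : ℝⁿ → ℝ and ε > 0, the support function of the ε-subdifferential satisfies sup_{g ∈ ∂_ε L(x)} ⟨z, g⟩ = inf_{λ > 0} (L(x + λz) − L(x) + ε)/λ for every x, z ∈ ℝⁿ. -/
set_option maxHeartbeats 1000000

open Set Filter Topology

private lemma eSubdiff_key {n : ℕ}
    (L : EuclideanSpace ℝ (Fin n) → ℝ) (hL : ConvexOn ℝ Set.univ L)
    (ε : ℝ) (x z : EuclideanSpace ℝ (Fin n)) (c : ℝ)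
    (hc : ∀ l : ℝ, 0 ≤ l → L x - ε + c * l ≤ L (x + l • z)) :
    ∃ g : EuclideanSpace ℝ (Fin n),
      (∀ y, L x + inner ℝ g (y - x) - ε ≤ L y) ∧ c ≤ (inner ℝ g z : ℝ) := by
  have hLcont : Continuous L := hL.locallyLipschitz.continuous
  set A : Set (EuclideanSpace ℝ (Fin n) × ℝ) := {p | L p.1 < p.2} with hA
  set B : Set (EuclideanSpace ℝ (Fin n) × ℝ) := {p | ∃ l : ℝ, 0 ≤ l ∧ p = (x + l • z, L x - ε + c * l)} with hB
  have hAconv : Convex ℝ A := by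
    have := hL.convex_strict_epigraph
    simpa [A] using this
  have hAopen : IsOpen A := isOpen_lt (hLcont.comp continuous_fst) continuous_snd
  have hBconv : Convex ℝ B := by
    rintro p ⟨l₁, hl₁, rfl⟩ q ⟨l₂, hl₂, rfl⟩ a b ha hb hab
    refine ⟨a * l₁ + b * l₂, by positivity, ?_⟩
    have h1 : a • (x + l₁ • z) + b • (x + l₂ • z) = x + (a * l₁ + b * l₂) • z := by
      have hx' : a • x + b • x = x := by rw [← add_smul, hab, one_smul]
      rw [smul_add, smul_add, smul_smul, smul_smul,
        show a • x + (a * l₁) • z + (b • x + (b * l₂) • z)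
          = (a • x + b • x) + ((a * l₁) • z + (b * l₂) • z) by abel, hx', ← add_smul]
    simp only [Prod.smul_mk, Prod.mk_add_mk, Prod.mk.injEq, smul_eq_mul]
    exact ⟨h1, by linear_combination (L x - ε) * hab⟩
  have hdisj : Disjoint A B := by
    rw [Set.disjoint_left]
    rintro p hpA ⟨l, hl, rfl⟩
    have := hc l hl
    simp only [A, Set.mem_setOf_eq] at hpA
    linarith
  obtain ⟨f, u, hfA, hfB⟩ := geometric_hahn_banach_open hAconv hAopen hBconv hdisj
  have hdecomp : ∀ (y : EuclideanSpace ℝ (Fin n)) (t : ℝ), f (y, t) = f (y, 0) + t * f (0, 1) := by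
    intro y t
    have h : (y, t) = ((y, (0:ℝ)) + t • ((0:EuclideanSpace ℝ (Fin n)), (1:ℝ))) := by
      simp [Prod.ext_iff]
    rw [h, map_add, map_smul, smul_eq_mul]
  have hadd : ∀ (y w : EuclideanSpace ℝ (Fin n)), f (y + w, 0) = f (y, 0) + f (w, 0) := by
    intro y w
    have h : ((y + w, (0:ℝ)) : _ × ℝ) = (y, 0) + (w, 0) := by simp
    rw [h, map_add]
  have hsmul : ∀ (a : ℝ) (y : EuclideanSpace ℝ (Fin n)), f (a • y, 0) = a * f (y, 0) := by
    intro a y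
    have h : ((a • y, (0:ℝ)) : _ × ℝ) = a • (y, 0) := by simp
    rw [h, map_smul, smul_eq_mul]
  set s : ℝ := f (0, 1) with hs
  -- strict epigraph points give bounds
  have hAbound : ∀ (y : EuclideanSpace ℝ (Fin n)) (t : ℝ), L y < t → f (y, 0) + t * s < u := by
    intro y t ht
    have := hfA (y, t) ht
    rwa [hdecomp] at this
  -- closure: f(y,0) + L y * s ≤ u
  have hclosed : ∀ y : EuclideanSpace ℝ (Fin n), f (y, 0) + L y * s ≤ u := by
    intro y
    by_contra h
    push_neg at h
    -- pick t slightly above L y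
    have hcont : ContinuousAt (fun t : ℝ => f (y, 0) + t * s) (L y) := by fun_prop
    have hlt : ∀ t > L y, f (y, 0) + t * s < u := fun t ht => hAbound y t ht
    have : f (y, 0) + L y * s ≤ u := by
      exact le_of_tendsto (f := fun t : ℝ => f (y, 0) + t * s)
        (x := 𝓝[>] (L y)) (hcont.tendsto.mono_left nhdsWithin_le_nhds)
        (eventually_nhdsWithin_of_forall (fun t ht => (hlt t ht).le))
    linarith
  have hBbound : ∀ l : ℝ, 0 ≤ l →
      u ≤ f (x, 0) + l * f (z, 0) + (L x - ε + c * l) * s := by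
    intro l hl
    have := hfB (x + l • z, L x - ε + c * l) ⟨l, hl, rfl⟩
    rwa [hdecomp, hadd, hsmul] at this
  have hfzero : f ((0 : EuclideanSpace ℝ (Fin n)), (0:ℝ)) = 0 := by
    have : ((0 : EuclideanSpace ℝ (Fin n)), (0:ℝ)) = (0 : EuclideanSpace ℝ (Fin n) × ℝ) := rfl
    rw [this, map_zero]
  have hε' : L x - ε + c * 0 ≤ L (x + (0:ℝ) • z) := hc 0 le_rfl
  simp only [zero_smul, add_zero, mul_zero] at hε'
  -- ε ≥ 0 would need hε; we get L x - ε ≤ L x, fine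
  have hsneg : s < 0 := by
    rcases lt_trichotomy s 0 with h | h | h
    · exact h
    · -- s = 0 : then f(y,0) ≤ u for all y, so f(·,0)=0, contradiction
      exfalso
      have hy0 : ∀ y : EuclideanSpace ℝ (Fin n), f (y, 0) < u := by
        intro y
        have := hAbound y (L y + 1) (by linarith)
        rw [h] at this; linarith
      have hy00 : ∀ y : EuclideanSpace ℝ (Fin n), f (y, 0) ≤ 0 := by
        intro y
        by_contra hy
        push_neg at hy
        obtain ⟨k, hk⟩ := exists_nat_gt (u / f (y, 0))
        have := hy0 ((k : ℝ) • y)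
        rw [hsmul] at this
        have : u / f (y, 0) * f (y, 0) < u := by
          calc u / f (y,0) * f (y,0) ≤ (k:ℝ) * f (y,0) := by
                apply mul_le_mul_of_nonneg_right hk.le hy.le
            _ < u := this
        rw [div_mul_cancel₀ _ (ne_of_gt hy)] at this
        exact lt_irrefl u this
      have hnegx : f (-x, 0) = - f (x, 0) := by
        have h' : ((-x, (0:ℝ)) : _ × ℝ) = -((x, 0) : _ × ℝ) := by simp
        rw [h', map_neg]
      have hx0 : f (x, 0) = 0 := le_antisymm (hy00 x) (by
        have h2 := hy00 (-x); rw [hnegx] at h2; linarith)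
      have h1 := hBbound 0 le_rfl
      rw [h] at h1
      simp at h1
      have h2 := hy0 x
      linarith
    · exfalso
      obtain ⟨k, hk⟩ := exists_nat_gt ((u - f ((0:EuclideanSpace ℝ (Fin n)), 0)) / s)
      have := hAbound 0 (max ((L (0:EuclideanSpace ℝ (Fin n))) + 1) (k+1)) (by
        have := le_max_left ((L (0:EuclideanSpace ℝ (Fin n))) + 1) ((k:ℝ)+1); linarith)
      have hmax : (k:ℝ) + 1 ≤ max ((L (0:EuclideanSpace ℝ (Fin n))) + 1) ((k:ℝ)+1) := le_max_right _ _
      have h2 : (u - f ((0:EuclideanSpace ℝ (Fin n)),0)) / s * s < ((k:ℝ)+1) * s := by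
        apply mul_lt_mul_of_pos_right _ h
        linarith
      rw [div_mul_cancel₀ _ (ne_of_gt h)] at h2
      have h3 : ((k:ℝ)+1) * s ≤ (max ((L (0:EuclideanSpace ℝ (Fin n))) + 1) ((k:ℝ)+1)) * s :=
        mul_le_mul_of_nonneg_right hmax h.le
      linarith
  -- define g
  set φ : EuclideanSpace ℝ (Fin n) →L[ℝ] ℝ := (-s)⁻¹ • (f.comp (ContinuousLinearMap.inl ℝ (EuclideanSpace ℝ (Fin n)) ℝ)) with hφ
  have hφval : ∀ y : EuclideanSpace ℝ (Fin n), φ y = (-s)⁻¹ * f (y, 0) := by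
    intro y; simp [hφ, ContinuousLinearMap.inl_apply]
  set g := (InnerProductSpace.toDual ℝ (EuclideanSpace ℝ (Fin n))).symm φ with hg
  have hginner : ∀ y : EuclideanSpace ℝ (Fin n), (inner ℝ g y : ℝ) = φ y := fun y =>
    InnerProductSpace.toDual_symm_apply
  have hsne : -s > 0 := by linarith
  refine ⟨g, ?_, ?_⟩
  · intro y
    have h1 := hclosed y
    have h2 := hBbound 0 le_rfl
    simp only [mul_zero, zero_mul, add_zero] at h2
    -- f(y,0) + Ly*s ≤ u ≤ f(x,0) + (Lx-ε)*s
    have hsub : (inner ℝ g (y - x) : ℝ) = (-s)⁻¹ * f (y, 0) - (-s)⁻¹ * f (x, 0) := by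
      rw [hginner, hφval]
      have : (y - x) = y + (-1 : ℝ) • x := by module
      rw [this, hadd, hsmul]; ring
    rw [hsub]
    have hkey : f (y, 0) + L y * s ≤ f (x, 0) + (L x - ε) * s := le_trans h1 h2
    have hinv : (0:ℝ) < (-s)⁻¹ := inv_pos.mpr hsne
    have h3 : f (y, 0) - f (x, 0) ≤ (L x - ε - L y) * s := by nlinarith [hkey]
    have h4 := mul_le_mul_of_nonneg_left h3 hinv.le
    have h5 : (-s)⁻¹ * ((L x - ε - L y) * s) = L y - L x + ε := by
      have hs0 : s ≠ 0 := ne_of_lt hsneg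
      field_simp
      ring
    have h6 : (-s)⁻¹ * (f (y, 0) - f (x, 0))
        = (-s)⁻¹ * f (y, 0) - (-s)⁻¹ * f (x, 0) := mul_sub _ _ _
    rw [h5, h6] at h4
    linarith
  · -- c ≤ inner ℝ g z
    rw [hginner, hφval]
    -- from hBbound : coefficient of l must be ≥ 0
    have hcoef : 0 ≤ f (z, 0) + c * s := by
      by_contra h
      push_neg at h
      have hKle : ∀ l : ℝ, 0 ≤ l →
          u - f (x, 0) - (L x - ε) * s ≤ l * (f (z, 0) + c * s) := by
        intro l hl
        nlinarith [hBbound l hl]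
      have hK0 : u - f (x, 0) - (L x - ε) * s ≤ 0 := by simpa using hKle 0 le_rfl
      have hl : 0 < (u - f (x, 0) - (L x - ε) * s - 1) / (f (z, 0) + c * s) :=
        div_pos_of_neg_of_neg (by linarith) h
      have h7 := hKle _ hl.le
      rw [div_mul_cancel₀ _ (ne_of_lt h)] at h7
      linarith
    have h2 : c * (-s) ≤ f (z, 0) := by nlinarith [hcoef]
    have h3 := mul_le_mul_of_nonneg_left h2 (inv_pos.mpr hsne).le
    have hs0 : s ≠ 0 := ne_of_lt hsneg
    have h4 : (-s)⁻¹ * (c * (-s)) = c := by field_simp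
    rw [h4] at h3
    exact h3

theorem eSubdiff_support_fn_identity {n : ℕ}
    (L : EuclideanSpace ℝ (Fin n) → ℝ) (hL : ConvexOn ℝ Set.univ L)
    (ε : ℝ) (hε : 0 < ε) (x z : EuclideanSpace ℝ (Fin n)) :
    sSup ((fun g : EuclideanSpace ℝ (Fin n) => (inner ℝ z g : ℝ)) ''
        {g : EuclideanSpace ℝ (Fin n) | ∀ y, L x + inner ℝ g (y - x) - ε ≤ L y}) =
      sInf {v : ℝ | ∃ l : ℝ, 0 < l ∧ v = (L (x + l • z) - L x + ε) / l} := by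
  set S : Set (EuclideanSpace ℝ (Fin n)) := {g | ∀ y, L x + inner ℝ g (y - x) - ε ≤ L y} with hS
  set T : Set ℝ := {v | ∃ l : ℝ, 0 < l ∧ v = (L (x + l • z) - L x + ε) / l} with hT
  have hTne : T.Nonempty := ⟨(L (x + (1:ℝ) • z) - L x + ε) / 1, 1, one_pos, rfl⟩
  have hTbdd : ∀ v ∈ T, L x - L (x - z) ≤ v := by
    rintro v ⟨l, hl, rfl⟩
    have ha : (0:ℝ) < 1 / (1 + l) := by positivity
    have hb : (0:ℝ) ≤ l / (1 + l) := by positivity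
    have hab : 1 / (1 + l) + l / (1 + l) = 1 := by field_simp
    have hcomb : (1 / (1 + l)) • (x + l • z) + (l / (1 + l)) • (x - z) = x := by
      have h1 : (1:ℝ) + l ≠ 0 := by positivity
      have h2 : (1 / (1 + l)) * l = l / (1 + l) := by ring
      rw [smul_add, smul_sub, smul_smul, h2,
        show (1/(1+l)) • x + (l/(1+l)) • z + ((l/(1+l)) • x - (l/(1+l)) • z)
            = (1/(1+l) + l/(1+l)) • x + ((l/(1+l)) • z - (l/(1+l)) • z) by
          rw [add_smul]; abel,
        hab, one_smul, sub_self, add_zero]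
    have := hL.2 (Set.mem_univ (x + l • z)) (Set.mem_univ (x - z)) ha.le hb hab
    rw [hcomb] at this
    rw [le_div_iff₀ hl]
    have h1 : (1:ℝ) + l ≠ 0 := by positivity
    have hexp : L x ≤ (1 / (1+l)) * L (x + l • z) + (l / (1+l)) * L (x - z) := by
      simpa [smul_eq_mul] using this
    have h2 : L x * (1 + l) ≤ L (x + l • z) + l * L (x - z) := by
      have h3 := mul_le_mul_of_nonneg_right hexp (by positivity : (0:ℝ) ≤ 1 + l)
      rw [add_mul, div_mul_eq_mul_div, div_mul_cancel₀ _ h1,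
        div_mul_eq_mul_div, div_mul_cancel₀ _ h1] at h3
      linarith
    nlinarith [h2, hε]
  have hTbddBelow : BddBelow T := ⟨L x - L (x - z), hTbdd⟩
  set m : ℝ := sInf T with hm
  -- key application
  have hckey : ∀ l : ℝ, 0 ≤ l → L x - ε + m * l ≤ L (x + l • z) := by
    intro l hl
    rcases eq_or_lt_of_le hl with h | h
    · simp [← h]; linarith
    · have hmem : (L (x + l • z) - L x + ε) / l ∈ T := ⟨l, h, rfl⟩
      have := csInf_le hTbddBelow hmem
      rw [le_div_iff₀ h] at this
      linarith
  obtain ⟨g₀, hg₀S, hg₀z⟩ := eSubdiff_key L hL ε x z m hckey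
  have hg₀S' : g₀ ∈ S := hg₀S
  have hSne : ((fun g : EuclideanSpace ℝ (Fin n) => (inner ℝ z g : ℝ)) '' S).Nonempty := ⟨_, g₀, hg₀S', rfl⟩
  have hSub : ∀ w ∈ (fun g : EuclideanSpace ℝ (Fin n) => (inner ℝ z g : ℝ)) '' S, ∀ v ∈ T, w ≤ v := by
    rintro w ⟨g, hgS, rfl⟩ v ⟨l, hl, rfl⟩
    have hq := hgS (x + l • z)
    rw [add_sub_cancel_left, real_inner_smul_right] at hq
    show (inner ℝ z g : ℝ) ≤ (L (x + l • z) - L x + ε) / l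
    rw [le_div_iff₀ hl, real_inner_comm]
    linarith
  have hSbddAbove : BddAbove ((fun g : EuclideanSpace ℝ (Fin n) => (inner ℝ z g : ℝ)) '' S) := by
    obtain ⟨v, hv⟩ := hTne
    exact ⟨v, fun w hw => hSub w hw v hv⟩
  apply le_antisymm
  · apply csSup_le hSne
    intro w hw
    exact le_csInf hTne (fun v hv => hSub w hw v hv)
  · calc m ≤ (inner ℝ g₀ z : ℝ) := hg₀z
      _ = (inner ℝ z g₀ : ℝ) := real_inner_comm _ _
      _ ≤ _ := le_csSup hSbddAbove ⟨g₀, hg₀S', rfl⟩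
end

section
/- (Subgradient method approximate convergence) Let L : ℝⁿ → ℝ be convex with minimizer x*, and suppose the iterates x^{(k+1)} = x^{(k)} − λ_k g^{(k)} with g^{(k)} ∈ ∂L(x^{(k)}) and ‖g^{(k)}‖ ≤ G. Then for every k, min_{i ≤ k} L(x^{(i)}) − L(x*) ≤ (‖x^{(1)} − x*‖² + G² Σ_{i=1}^{k} λ_i²)/(2 Σ_{i=1}^{k} λ_i). -/
theorem subgradient_method_bound {n : ℕ}
    (L : EuclideanSpace ℝ (Fin n) → ℝ) (hL : ConvexOn ℝ Set.univ L)
    (xstar : EuclideanSpace ℝ (Fin n)) (hmin : ∀ y, L xstar ≤ L y)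
    (x g : ℕ → EuclideanSpace ℝ (Fin n)) (lam : ℕ → ℝ) (G : ℝ)
    (hlam : ∀ i, 0 < lam i)
    (hiter : ∀ i, x (i + 1) = x i - lam i • g i)
    (hsub : ∀ i, ∀ y, L (x i) + inner ℝ (g i) (y - x i) ≤ L y)
    (hG : ∀ i, ‖g i‖ ≤ G) (k : ℕ) :
    (Finset.range (k + 1)).inf' Finset.nonempty_range_add_one (fun i => L (x i)) - L xstar ≤
      (‖x 0 - xstar‖ ^ 2 + G ^ 2 * ∑ i ∈ Finset.range (k + 1), lam i ^ 2) /
        (2 * ∑ i ∈ Finset.range (k + 1), lam i) := by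
  have hG0 : 0 ≤ G := le_trans (norm_nonneg (g 0)) (hG 0)
  -- per-step inequality
  have hstep : ∀ i, ‖x (i + 1) - xstar‖ ^ 2 ≤
      ‖x i - xstar‖ ^ 2 - 2 * lam i * (L (x i) - L xstar) + G ^ 2 * lam i ^ 2 := by
    intro i
    have h1 : x (i + 1) - xstar = (x i - xstar) - lam i • g i := by
      rw [hiter i]; abel
    rw [h1, norm_sub_sq_real]
    have h2 : (inner ℝ (x i - xstar) (lam i • g i) : ℝ) =
        lam i * inner ℝ (g i) (x i - xstar) := by
      rw [real_inner_smul_right, real_inner_comm]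
    have h3 : L (x i) - L xstar ≤ inner ℝ (g i) (x i - xstar) := by
      have := hsub i xstar
      have h4 : (inner ℝ (g i) (xstar - x i) : ℝ) = - inner ℝ (g i) (x i - xstar) := by
        rw [← inner_neg_right]; congr 1; abel
      linarith [this, h4.symm ▸ this]
    have h5 : ‖lam i • g i‖ ^ 2 ≤ G ^ 2 * lam i ^ 2 := by
      rw [norm_smul, mul_pow]
      have : ‖g i‖ ^ 2 ≤ G ^ 2 := by
        apply pow_le_pow_left₀ (norm_nonneg _) (hG i)
      calc ‖lam i‖ ^ 2 * ‖g i‖ ^ 2 ≤ ‖lam i‖ ^ 2 * G ^ 2 := by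
            apply mul_le_mul_of_nonneg_left this (sq_nonneg _)
        _ = G ^ 2 * lam i ^ 2 := by rw [Real.norm_eq_abs, sq_abs]; ring
    nlinarith [mul_le_mul_of_nonneg_left h3 (le_of_lt (hlam i))]
  -- telescoped inequality
  have htel : ∀ m : ℕ, ‖x m - xstar‖ ^ 2 ≤ ‖x 0 - xstar‖ ^ 2
      - 2 * ∑ i ∈ Finset.range m, lam i * (L (x i) - L xstar)
      + G ^ 2 * ∑ i ∈ Finset.range m, lam i ^ 2 := by
    intro m
    induction m with
    | zero => simp
    | succ m ih =>
      rw [Finset.sum_range_succ, Finset.sum_range_succ]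
      have := hstep m
      nlinarith
  have key : 2 * ∑ i ∈ Finset.range (k+1), lam i * (L (x i) - L xstar) ≤
      ‖x 0 - xstar‖ ^ 2 + G ^ 2 * ∑ i ∈ Finset.range (k+1), lam i ^ 2 := by
    have := htel (k + 1)
    nlinarith [sq_nonneg ‖x (k+1) - xstar‖]
  set M := (Finset.range (k + 1)).inf' Finset.nonempty_range_add_one (fun i => L (x i)) with hM
  have hsumpos : 0 < ∑ i ∈ Finset.range (k+1), lam i :=
    Finset.sum_pos (fun i _ => hlam i) Finset.nonempty_range_add_one
  have hlow : (∑ i ∈ Finset.range (k+1), lam i) * (M - L xstar) ≤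
      ∑ i ∈ Finset.range (k+1), lam i * (L (x i) - L xstar) := by
    rw [Finset.sum_mul]
    apply Finset.sum_le_sum
    intro i hi
    have hMi : M ≤ L (x i) := Finset.inf'_le _ hi
    nlinarith [hlam i]
  rw [le_div_iff₀ (by linarith)]
  nlinarith
end

section
/- (Subgradient method with diminishing steps converges in value) Under the setting of the subgradient method with bounded subgradients ‖g^{(i)}‖ ≤ G, if Σ λ_i = ∞ and Σ λ_i² < ∞, then min_{i ≤ k} L(x^{(i)}) → inf L as k → ∞. -/
theorem subgradient_method_converges {n : ℕ}
    (L : EuclideanSpace ℝ (Fin n) → ℝ) (hL : ConvexOn ℝ Set.univ L)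
    (xstar : EuclideanSpace ℝ (Fin n)) (hmin : ∀ y, L xstar ≤ L y)
    (x g : ℕ → EuclideanSpace ℝ (Fin n)) (lam : ℕ → ℝ) (G : ℝ)
    (hlam : ∀ i, 0 < lam i)
    (hiter : ∀ i, x (i + 1) = x i - lam i • g i)
    (hsub : ∀ i, ∀ y, L (x i) + inner ℝ (g i) (y - x i) ≤ L y)
    (hG : ∀ i, ‖g i‖ ≤ G)
    (hdiv : ¬ Summable lam) (hsq : Summable (fun i => lam i ^ 2)) :
    Filter.Tendsto
      (fun k => (Finset.range (k + 1)).inf' Finset.nonempty_range_add_one (fun i => L (x i)))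
      Filter.atTop (nhds (⨅ z, L z)) := by
  set Lstar := L xstar with hLs
  have hbdd : BddBelow (Set.range L) := ⟨Lstar, by rintro _ ⟨y, rfl⟩; exact hmin y⟩
  have hinf : (⨅ z, L z) = Lstar := le_antisymm (ciInf_le hbdd xstar) (le_ciInf hmin)
  rw [hinf]
  have hG0 : 0 ≤ G := le_trans (norm_nonneg _) (hG 0)
  set D : ℕ → ℝ := fun i => ‖x i - xstar‖ ^ 2 with hD
  have key : ∀ i, D (i + 1) ≤ D i - 2 * lam i * (L (x i) - Lstar) + lam i ^ 2 * G ^ 2 := by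
    intro i
    have hx : x (i + 1) - xstar = (x i - xstar) - lam i • g i := by rw [hiter i]; abel
    have hexp : ‖x (i + 1) - xstar‖ ^ 2 = ‖x i - xstar‖ ^ 2
        - 2 * (lam i * inner ℝ (g i) (x i - xstar)) + lam i ^ 2 * ‖g i‖ ^ 2 := by
      rw [hx, norm_sub_sq_real, real_inner_smul_right, norm_smul, mul_pow, Real.norm_eq_abs, sq_abs,
        real_inner_comm (x i - xstar) (g i)]
    have hsg : L (x i) - Lstar ≤ inner ℝ (g i) (x i - xstar) := by
      have h := hsub i xstar
      have : (inner ℝ (g i) (xstar - x i) : ℝ) = - inner ℝ (g i) (x i - xstar) := by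
        rw [← inner_neg_right]; congr 1; abel
      rw [this] at h
      linarith
    have hgG : ‖g i‖ ^ 2 ≤ G ^ 2 := pow_le_pow_left₀ (norm_nonneg _) (hG i) 2
    have hl := hlam i
    simp only [hD]
    nlinarith [sq_nonneg (lam i)]
  have tele : ∀ k, D k + 2 * ∑ i ∈ Finset.range k, lam i * (L (x i) - Lstar) ≤
      D 0 + G ^ 2 * ∑ i ∈ Finset.range k, lam i ^ 2 := by
    intro k
    induction k with
    | zero => simp
    | succ k ih =>
        have := key k
        rw [Finset.sum_range_succ, Finset.sum_range_succ]
        nlinarith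
  set S := ∑' i, lam i ^ 2 with hS
  set C := (D 0 + G ^ 2 * S) / 2 with hC
  have hpartS : ∀ k : ℕ, ∑ i ∈ Finset.range k, lam i ^ 2 ≤ S :=
    fun k => Summable.sum_le_tsum _ (fun i _ => sq_nonneg _) hsq
  have hsumC : ∀ k, ∑ i ∈ Finset.range (k + 1), lam i * (L (x i) - Lstar) ≤ C := by
    intro k
    have h1 := tele (k + 1)
    have h2 := hpartS (k + 1)
    have h3 : (0:ℝ) ≤ D (k + 1) := sq_nonneg _
    nlinarith
  set m : ℕ → ℝ := fun k => (Finset.range (k + 1)).inf' Finset.nonempty_range_add_one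
    (fun i => L (x i)) with hm
  set A : ℕ → ℝ := fun k => ∑ i ∈ Finset.range (k + 1), lam i with hA
  have hApos : ∀ k, 0 < A k := fun k =>
    Finset.sum_pos (fun i _ => hlam i) Finset.nonempty_range_add_one
  have hlow : ∀ k, Lstar ≤ m k := fun k => Finset.le_inf' _ _ (fun i _ => hmin (x i))
  have hupb : ∀ k, m k ≤ Lstar + C / A k := by
    intro k
    have h1 : (m k - Lstar) * A k ≤ C := by
      calc (m k - Lstar) * A k = ∑ i ∈ Finset.range (k + 1), lam i * (m k - Lstar) := by
            simp only [hA, Finset.mul_sum]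
            exact Finset.sum_congr rfl (fun i _ => mul_comm _ _)
        _ ≤ ∑ i ∈ Finset.range (k + 1), lam i * (L (x i) - Lstar) := by
            apply Finset.sum_le_sum
            intro i hi
            have : m k ≤ L (x i) := Finset.inf'_le _ hi
            have := (hlam i).le
            nlinarith
        _ ≤ C := hsumC k
    have h2 := hApos k
    have h3 := (le_div_iff₀ h2).mpr h1
    linarith
  have hAtop : Filter.Tendsto A Filter.atTop Filter.atTop := by
    have h := (not_summable_iff_tendsto_nat_atTop_of_nonneg
      (fun i => (hlam i).le)).mp hdiv
    exact h.comp (Filter.tendsto_add_atTop_nat 1)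
  have hCdiv : Filter.Tendsto (fun k => Lstar + C / A k) Filter.atTop (nhds Lstar) := by
    have : Filter.Tendsto (fun k => C / A k) Filter.atTop (nhds 0) :=
      Filter.Tendsto.div_atTop tendsto_const_nhds hAtop
    simpa using (tendsto_const_nhds.add this)
  exact tendsto_of_tendsto_of_tendsto_of_le_of_le tendsto_const_nhds hCdiv hlow hupb
end
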